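/- Let (R_x) be a family of commutative rings indexed by a set X, R = ∏_{x ∈ X} R_x, and M a maximal ideal of the power set ring P(X). Then M* = {f ∈ R : Su(f) ∈ M} is an ideal of R, where Su(f) = {x ∈ X : f_x ≠ 0}. Moreover: if each R_x is an integral domain then R/M* is an integral domain; if each R_x is a field then R/M* is a field. -/

import Mathlib

section aux

variable {X : Type*} (M : Ideal (AsBoolRing (Set X)))

lemma mem_of_subset {A B : Set X} (hB : toBoolRing B ∈ M) (h : A ⊆ B) :
    toBoolRing A ∈ M := by
  have : toBoolRing A = toBoolRing A * toBoolRing B := by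
    rw [← toBoolRing_inf]
    congr 1
    exact (Set.inter_eq_left.mpr h).symm
  rw [this]
  exact M.mul_mem_left _ hB

lemma mem_union {A B : Set X} (hA : toBoolRing A ∈ M) (hB : toBoolRing B ∈ M) :
    toBoolRing (A ∪ B) ∈ M := by
  have hd : Disjoint A (B \ A) := Set.disjoint_sdiff_right
  have h1 : A ∪ B = symmDiff A (B \ A) := by
    rw [hd.symmDiff_eq_sup]
    simp [Set.sup_eq_union, Set.union_diff_self]
  rw [h1, toBoolRing_symmDiff]
  exact M.add_mem hA (mem_of_subset M hB Set.diff_subset)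

end aux

/-- For a family of commutative rings `(R_x)` and a maximal ideal `M` of the power set ring
`P(X)`, the set `M* = {f : Su(f) ∈ M}` is an ideal of `∏ R_x`; if each `R_x` is a domain then
the quotient by `M*` is a domain, and if each `R_x` is a field then the quotient is a field. -/
theorem stmt16 {X : Type*} (R : X → Type*) [∀ x, CommRing (R x)]
    (M : Ideal (AsBoolRing (Set X))) (hM : M.IsMaximal) :
    ∃ I : Ideal (∀ x, R x),
      (∀ f : ∀ x, R x, f ∈ I ↔ toBoolRing {x : X | f x ≠ 0} ∈ M) ∧
      ((∀ x, IsDomain (R x)) → IsDomain ((∀ x, R x) ⧸ I)) ∧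
      ((∀ x, IsField (R x)) → IsField ((∀ x, R x) ⧸ I)) := by
  set I : Ideal (∀ x, R x) :=
    { carrier := {f | toBoolRing {x : X | f x ≠ 0} ∈ M}
      zero_mem' := by
        have : {x : X | (0 : ∀ x, R x) x ≠ 0} = (∅ : Set X) := by
          ext x; simp
        show toBoolRing {x : X | (0 : ∀ x, R x) x ≠ 0} ∈ M
        rw [this, ← Set.bot_eq_empty, toBoolRing_bot]
        exact M.zero_mem
      add_mem' := by
        intro f g hf hg
        show toBoolRing {x : X | (f + g) x ≠ 0} ∈ M
        refine mem_of_subset M (mem_union M hf hg) ?_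
        intro x hx
        simp only [Set.mem_setOf_eq, Pi.add_apply] at hx
        by_contra h
        simp only [Set.mem_union, Set.mem_setOf_eq, not_or, not_not] at h
        exact hx (by rw [h.1, h.2, add_zero])
      smul_mem' := by
        intro c f hf
        show toBoolRing {x : X | (c • f) x ≠ 0} ∈ M
        refine mem_of_subset M hf ?_
        intro x hx
        simp only [Set.mem_setOf_eq, Pi.smul_apply, smul_eq_mul] at hx ⊢
        intro h
        exact hx (show (c * f) x = 0 by rw [Pi.mul_apply, h, mul_zero])
    }
  have hmem : ∀ f : ∀ x, R x, f ∈ I ↔ toBoolRing {x : X | f x ≠ 0} ∈ M := fun f => Iff.rfl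
  refine ⟨I, hmem, ?_, ?_⟩
  · -- domain case
    intro hdom
    haveI := hdom
    have hne : I ≠ ⊤ := by
      intro h
      have h1 : (1 : ∀ x, R x) ∈ I := h ▸ Submodule.mem_top
      rw [hmem] at h1
      have : {x : X | (1 : ∀ x, R x) x ≠ 0} = Set.univ := by
        ext x; simp [one_ne_zero]
      rw [this] at h1
      exact hM.ne_top (Ideal.eq_top_iff_one M |>.mpr (by rw [← Set.top_eq_univ] at h1; rw [← toBoolRing_top]; exact h1))
    haveI : I.IsPrime := by
      refine ⟨hne, ?_⟩
      intro f g hfg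
      rw [hmem] at hfg ⊢
      rw [hmem (f := g)]
      have hsup : {x : X | (f * g) x ≠ 0} = {x | f x ≠ 0} ∩ {x | g x ≠ 0} := by
        ext x
        simp only [Set.mem_setOf_eq, Pi.mul_apply, Set.mem_inter_iff, mul_ne_zero_iff]
      rw [hsup] at hfg
      exact hM.isPrime.mem_or_mem (show toBoolRing {x | f x ≠ 0} *
        toBoolRing {x | g x ≠ 0} ∈ M by rw [← toBoolRing_inf]; exact hfg)
    exact Ideal.Quotient.isDomain I
  · -- field case
    intro hfield
    haveI : ∀ x, Nontrivial (R x) := fun x => (hfield x).toField.toNontrivial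
    have hne : I ≠ ⊤ := by
      intro h
      have h1 : (1 : ∀ x, R x) ∈ I := h ▸ Submodule.mem_top
      rw [hmem] at h1
      have : {x : X | (1 : ∀ x, R x) x ≠ 0} = Set.univ := by
        ext x; simp [one_ne_zero]
      rw [this] at h1
      exact hM.ne_top (Ideal.eq_top_iff_one M |>.mpr (by rw [← Set.top_eq_univ] at h1; rw [← toBoolRing_top]; exact h1))
    have hIm : I.IsMaximal := by
      refine Ideal.isMaximal_iff.mpr ⟨fun h => hne (Ideal.eq_top_iff_one I |>.mpr h), ?_⟩
      intro J f hIJ hfI hfJ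
      -- Su f ∉ M, so complement ∈ M
      have hSu : toBoolRing {x : X | f x ≠ 0} ∉ M := fun h => hfI (hmem f |>.mpr h)
      have hcompl : toBoolRing ({x : X | f x ≠ 0}ᶜ) ∈ M := by
        have hprod : toBoolRing {x : X | f x ≠ 0} * toBoolRing ({x : X | f x ≠ 0}ᶜ) = 0 := by
          rw [← toBoolRing_inf, inf_compl_eq_bot]
          exact toBoolRing_bot
        rcases hM.isPrime.mem_or_mem (hprod ▸ M.zero_mem) with h | h
        · exact absurd h hSu
        · exact h
      -- build inverse
      classical
      set g : ∀ x, R x := fun x => if h : f x = 0 then 0 else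
        ((hfield x).mul_inv_cancel h).choose with hg
      have hgf : (1 : ∀ x, R x) - g * f ∈ I := by
        rw [hmem]
        refine mem_of_subset M hcompl ?_
        intro x hx
        simp only [Set.mem_setOf_eq, Pi.sub_apply, Pi.mul_apply, Pi.one_apply] at hx
        simp only [Set.mem_compl_iff, Set.mem_setOf_eq, not_not]
        by_contra h
        apply hx
        rw [hg]
        simp only [dif_neg h]
        have hs := ((hfield x).mul_inv_cancel h).choose_spec
        rw [mul_comm] at hs
        rw [hs, sub_self]
      have : (1 : ∀ x, R x) = (1 - g * f) + g * f := by ring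
      rw [this]
      exact J.add_mem (hIJ hgf) (J.mul_mem_left g hfJ)
    exact (Ideal.Quotient.maximal_ideal_iff_isField_quotient I).mp hIm
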